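/- arXiv:1110.5833 — 7 statements merged into one kernel-verified Lean document; each statement's English description precedes it below -/
import Mathlib

section
/- Let E : Σ → B(X) be an operator-valued measure on a measurable space (Ω, Σ) such that E(B) is an idempotent for every B ∈ Σ. Then E is spectral: for all A, B ∈ Σ, E(A ∩ B) = E(A) · E(B). -/
/-- An operator-valued measure: countably additive in the strong operator topology
(equivalently, by the Orlicz–Pettis theorem, in the weak operator topology). -/
def IsOperatorValuedMeasure {Ω X Y : Type*} [MeasurableSpace Ω]
    [NormedAddCommGroup X] [NormedSpace ℂ X] [NormedAddCommGroup Y] [NormedSpace ℂ Y]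
    (E : Set Ω → (X →L[ℂ] Y)) : Prop :=
  ∀ B : ℕ → Set Ω, (∀ i, MeasurableSet (B i)) → Pairwise (Function.onFun Disjoint B) →
    ∀ x : X, HasSum (fun i => E (B i) x) (E (⋃ i, B i) x)

/-- If `E : Σ → B(X)` is an operator-valued measure each of whose values is an
idempotent, then `E` is spectral: `E (A ∩ B) = E A * E B` for all measurable `A, B`. -/
theorem stmt1 {Ω X : Type*} [MeasurableSpace Ω]
    [NormedAddCommGroup X] [NormedSpace ℂ X] [CompleteSpace X]
    (E : Set Ω → (X →L[ℂ] X)) (hE : IsOperatorValuedMeasure E)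
    (hidem : ∀ B : Set Ω, MeasurableSet B → E B * E B = E B) :
    ∀ A B : Set Ω, MeasurableSet A → MeasurableSet B → E (A ∩ B) = E A * E B := by
  -- Step 1: E ∅ = 0
  have h0 : ∀ x : X, E ∅ x = 0 := by
    intro x
    have h := hE (fun _ => ∅) (fun _ => MeasurableSet.empty)
      (fun i j _ => disjoint_bot_left) x
    simp only [Set.iUnion_empty] at h
    have h1 := h.summable.tendsto_atTop_zero
    exact tendsto_nhds_unique tendsto_const_nhds h1
  -- Step 2: finite additivity
  have hadd : ∀ A B : Set Ω, MeasurableSet A → MeasurableSet B → Disjoint A B →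
      E (A ∪ B) = E A + E B := by
    intro A B hA hB hAB
    set f : ℕ → Set Ω := fun n => if n = 0 then A else if n = 1 then B else ∅ with hf
    have hmeas : ∀ i, MeasurableSet (f i) := by
      intro i; simp only [hf]
      split_ifs with h1 h2
      · exact hA
      · exact hB
      · exact MeasurableSet.empty
    have hdisj : Pairwise (Function.onFun Disjoint f) := by
      intro i j hij
      simp only [Function.onFun, hf]
      split_ifs with h1 h2 h3 h4 <;>
        first
          | (exfalso; omega)
          | exact hAB
          | exact hAB.symm
          | exact disjoint_bot_left
          | exact disjoint_bot_right
    have hU : (⋃ i, f i) = A ∪ B := by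
      ext y
      simp only [Set.mem_iUnion, Set.mem_union, hf]
      constructor
      · rintro ⟨i, hi⟩
        split_ifs at hi with h1 h2
        · exact Or.inl hi
        · exact Or.inr hi
        · exact absurd hi (Set.notMem_empty y)
      · rintro (hy | hy)
        · exact ⟨0, by simp [hy]⟩
        · exact ⟨1, by simp [hy]⟩
    ext x
    have h := hE f hmeas hdisj x
    rw [hU] at h
    have hvan : ∀ i ∉ ({0, 1} : Finset ℕ), E (f i) x = 0 := by
      intro i hi
      simp only [Finset.mem_insert, Finset.mem_singleton, not_or] at hi
      simp [hf, hi.1, hi.2, h0]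
    have h2 : HasSum (fun i => E (f i) x) (E A x + E B x) := by
      have hs := hasSum_sum_of_ne_finset_zero (L := SummationFilter.unconditional ℕ) hvan
      simpa [hf] using hs
    simpa using h.unique h2
  -- Step 3: disjoint sets give zero products
  have hzero : ∀ A B : Set Ω, MeasurableSet A → MeasurableSet B → Disjoint A B →
      E A * E B = 0 := by
    intro A B hA hB hAB
    have hP := hidem A hA
    have hQ := hidem B hB
    have hPQ : (E A + E B) * (E A + E B) = E A + E B := by
      have h := hidem (A ∪ B) (hA.union hB)
      rwa [hadd A B hA hB hAB] at h
    have hexp : (E A + E B) * (E A + E B) = E A + E B + (E A * E B + E B * E A) := by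
      rw [add_mul, mul_add, mul_add, hP, hQ]; abel
    have hsum : E A * E B + E B * E A = 0 :=
      add_eq_left.mp (hexp.symm.trans hPQ)
    -- left multiply by E A
    have hL : E A * E B + E A * E B * E A = 0 := by
      have := congrArg (fun T => E A * T) hsum
      simpa [mul_add, ← mul_assoc, hP] using this
    -- right multiply by E A
    have hR : E A * E B * E A + E B * E A = 0 := by
      have := congrArg (fun T => T * E A) hsum
      simpa [add_mul, mul_assoc, hP] using this
    have hcomm : E A * E B = E B * E A := by
      have h1 : E A * E B = -(E A * E B * E A) := by
        rwa [add_eq_zero_iff_eq_neg] at hL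
      have h2 : E B * E A = -(E A * E B * E A) := by
        rw [add_comm] at hR
        rwa [add_eq_zero_iff_eq_neg] at hR
      rw [h1, h2]
    have htwo : (2 : ℂ) • (E A * E B) = 0 := by
      rw [two_smul]
      calc E A * E B + E A * E B = E A * E B + E B * E A := by rw [hcomm]
        _ = 0 := hsum
    have := congrArg (fun T => ((2 : ℂ)⁻¹) • T) htwo
    simpa [smul_smul] using this
  -- Step 4: conclude
  intro A B hA hB
  have hA' : A = (A ∩ B) ∪ (A \ B) := by rw [Set.inter_union_diff]
  have hB' : B = (A ∩ B) ∪ (B \ A) := by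
    rw [Set.inter_comm, Set.inter_union_diff]
  have hEA : E A = E (A ∩ B) + E (A \ B) := by
    conv_lhs => rw [hA']
    exact hadd _ _ (hA.inter hB) (hA.diff hB) (Set.disjoint_sdiff_right.mono_left
      Set.inter_subset_right)
  have hEB : E B = E (A ∩ B) + E (B \ A) := by
    conv_lhs => rw [hB']
    exact hadd _ _ (hA.inter hB) (hB.diff hA) (Set.disjoint_sdiff_right.mono_left
      Set.inter_subset_left)
  have z1 : E (A ∩ B) * E (B \ A) = 0 :=
    hzero _ _ (hA.inter hB) (hB.diff hA)
      (Set.disjoint_sdiff_right.mono_left Set.inter_subset_left)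
  have z2 : E (A \ B) * E (A ∩ B) = 0 :=
    hzero _ _ (hA.diff hB) (hA.inter hB)
      (Set.disjoint_sdiff_left.mono_right Set.inter_subset_right)
  have z3 : E (A \ B) * E (B \ A) = 0 :=
    hzero _ _ (hA.diff hB) (hB.diff hA)
      (Set.disjoint_sdiff_left.mono_right Set.diff_subset)
  have hP := hidem (A ∩ B) (hA.inter hB)
  rw [hEA, hEB, add_mul, mul_add, mul_add, hP, z1, z2, z3]
  abel
end

section
/- Let (x_i)_{i∈ℕ} ⊆ H and (y_i)_{i∈ℕ} ⊆ H be Bessel sequences in a Hilbert space H (each with a finite Bessel bound) such that x = Σ_i ⟨x, y_i⟩ x_i for all x ∈ H. Then (x_i) satisfies a lower frame inequality: C⁻¹‖x‖² ≤ Σ_i |⟨x, x_i⟩|² for all x ∈ H, where C is a Bessel bound for (y_i). Hence both (x_i) and (y_i) are frames. -/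
/-- If `(x_i)` and `(y_i)` are Bessel sequences in a Hilbert space `H` (with Bessel
bounds `B` and `C` respectively) satisfying the reconstruction formula
`v = Σ_i ⟨v, y_i⟩ x_i`, then `(x_i)` satisfies the lower frame inequality
`C⁻¹ ‖v‖² ≤ Σ_i |⟨v, x_i⟩|²`; hence both `(x_i)` and `(y_i)` are frames. -/
theorem stmt8 {H : Type*} [NormedAddCommGroup H] [InnerProductSpace ℂ H] [CompleteSpace H]
    (x y : ℕ → H) (B C : ℝ) (hC : 0 < C)
    (hxBessel : ∀ v : H, Summable (fun i => ‖(inner ℂ (x i) v : ℂ)‖ ^ 2) ∧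
      ∑' i, ‖(inner ℂ (x i) v : ℂ)‖ ^ 2 ≤ B * ‖v‖ ^ 2)
    (hyBessel : ∀ v : H, Summable (fun i => ‖(inner ℂ (y i) v : ℂ)‖ ^ 2) ∧
      ∑' i, ‖(inner ℂ (y i) v : ℂ)‖ ^ 2 ≤ C * ‖v‖ ^ 2)
    (hrec : ∀ v : H, HasSum (fun i => (inner ℂ (y i) v : ℂ) • x i) v) :
    ∀ v : H, C⁻¹ * ‖v‖ ^ 2 ≤ ∑' i, ‖(inner ℂ (x i) v : ℂ)‖ ^ 2 := by
  intro v
  set S := ∑' i, ‖(inner ℂ (x i) v : ℂ)‖ ^ 2 with hSdef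
  have hS0 : 0 ≤ S := tsum_nonneg fun i => by positivity
  rcases eq_or_ne v 0 with rfl | hv
  · simpa using hS0
  have hvpos : 0 < ‖v‖ := norm_pos_iff.mpr hv
  have hSsum := (hxBessel v).1
  have hAsum := (hyBessel v).1
  set A := ∑' i, ‖(inner ℂ (y i) v : ℂ)‖ ^ 2 with hAdef
  have hA0 : 0 ≤ A := tsum_nonneg fun i => by positivity
  -- the reconstruction formula applied via the inner product with v
  have hsum : HasSum (fun i => (inner ℂ (y i) v : ℂ) * (inner ℂ v (x i) : ℂ))
      (inner ℂ v v : ℂ) := by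
    have h := (hrec v).mapL (innerSL ℂ v)
    simpa [inner_smul_right, mul_comm] using h
  have hsummable_norm :
      Summable (fun i => ‖(inner ℂ (y i) v : ℂ)‖ * ‖(inner ℂ (x i) v : ℂ)‖) := by
    apply Summable.of_nonneg_of_le (fun i => by positivity) (fun i => ?_)
      ((hAsum.add hSsum).div_const 2)
    have h := sq_nonneg (‖(inner ℂ (y i) v : ℂ)‖ - ‖(inner ℂ (x i) v : ℂ)‖)
    nlinarith
  have hnorm : ‖v‖ ^ 2 ≤ ∑' i, ‖(inner ℂ (y i) v : ℂ)‖ * ‖(inner ℂ (x i) v : ℂ)‖ := by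
    have h1 : ‖(inner ℂ v v : ℂ)‖ = ‖v‖ ^ 2 := by
      rw [@inner_self_eq_norm_sq_to_K ℂ]
      simp [sq_abs]
    calc ‖v‖ ^ 2 = ‖(inner ℂ v v : ℂ)‖ := h1.symm
      _ = ‖∑' i, (inner ℂ (y i) v : ℂ) * (inner ℂ v (x i) : ℂ)‖ := by rw [hsum.tsum_eq]
      _ ≤ ∑' i, ‖(inner ℂ (y i) v : ℂ) * (inner ℂ v (x i) : ℂ)‖ := by
          apply norm_tsum_le_tsum_norm
          simpa [norm_mul, norm_inner_symm v] using hsummable_norm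
      _ = ∑' i, ‖(inner ℂ (y i) v : ℂ)‖ * ‖(inner ℂ (x i) v : ℂ)‖ := by
          simp [norm_mul, norm_inner_symm v]
  have hCS : ∑' i, ‖(inner ℂ (y i) v : ℂ)‖ * ‖(inner ℂ (x i) v : ℂ)‖ ≤
      Real.sqrt A * Real.sqrt S := by
    apply Summable.tsum_le_of_sum_le hsummable_norm
    intro s
    calc ∑ i ∈ s, ‖(inner ℂ (y i) v : ℂ)‖ * ‖(inner ℂ (x i) v : ℂ)‖
        ≤ Real.sqrt (∑ i ∈ s, ‖(inner ℂ (y i) v : ℂ)‖ ^ 2) *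
          Real.sqrt (∑ i ∈ s, ‖(inner ℂ (x i) v : ℂ)‖ ^ 2) :=
          Real.sum_mul_le_sqrt_mul_sqrt s _ _
      _ ≤ Real.sqrt A * Real.sqrt S := by
          gcongr <;>
          exact Summable.sum_le_tsum s (fun i _ => by positivity) (by assumption)
  have hA_le : A ≤ C * ‖v‖ ^ 2 := (hyBessel v).2
  have hsqrtA : Real.sqrt A ≤ Real.sqrt C * ‖v‖ := by
    rw [← Real.sqrt_sq hvpos.le, ← Real.sqrt_mul hC.le]
    exact Real.sqrt_le_sqrt hA_le
  have key : ‖v‖ ^ 2 ≤ Real.sqrt C * ‖v‖ * Real.sqrt S := by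
    calc ‖v‖ ^ 2 ≤ Real.sqrt A * Real.sqrt S := hnorm.trans hCS
      _ ≤ Real.sqrt C * ‖v‖ * Real.sqrt S := by gcongr
  -- square both sides
  have hsq : (‖v‖ ^ 2) ^ 2 ≤ C * ‖v‖ ^ 2 * S := by
    have h2 : (Real.sqrt C * ‖v‖ * Real.sqrt S) ^ 2 = C * ‖v‖ ^ 2 * S := by
      rw [mul_pow, mul_pow, Real.sq_sqrt hC.le, Real.sq_sqrt hS0]
    calc (‖v‖ ^ 2) ^ 2 ≤ (Real.sqrt C * ‖v‖ * Real.sqrt S) ^ 2 := by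
          apply pow_le_pow_left₀ (by positivity) key
      _ = C * ‖v‖ ^ 2 * S := h2
  rw [inv_mul_le_iff₀ hC]
  nlinarith [hsq, pow_pos hvpos 2]
end

section
/- Let H be a separable Hilbert space with orthonormal basis (e_i)_{i∈ℕ}. Define the sequence (x_i) obtained by listing e_1 once, e_2 twice, e_3 three times, etc. (x lists e_n with multiplicity n), and (y_i) listing (1/n)e_n with multiplicity n correspondingly. Then: (a) x = Σ_i ⟨x, y_i⟩ x_i unconditionally for every x ∈ H (so (x_i, y_i) is a framing), with ‖x_i‖ ≤ 1 and ‖y_i‖ ≤ 1; (b) Σ_i |⟨e_n, x_i⟩|² = n, so (x_i) is not a Bessel sequence; (c) Σ_i |⟨e_n, y_i⟩|² = 1/n, so (y_i) is Bessel but not a frame. -/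
abbrev FramingIndex : Type := (n : ℕ) × Fin (n + 1)

section aux
variable {H : Type*} [NormedAddCommGroup H] [InnerProductSpace ℂ H]

lemma framing_card_filter_le (t : Finset FramingIndex) (n : ℕ) :
    (t.filter fun j => j.1 = n).card ≤ n + 1 := by
  classical
  have hsub : (t.filter fun j => j.1 = n) ⊆
      ({n} : Finset ℕ).sigma fun m => (Finset.univ : Finset (Fin (m + 1))) := by
    intro j hj
    rw [Finset.mem_sigma]
    exact ⟨Finset.mem_singleton.mpr (Finset.mem_filter.mp hj).2, Finset.mem_univ _⟩
  calc (t.filter fun j => j.1 = n).card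
      ≤ (({n} : Finset ℕ).sigma fun m => (Finset.univ : Finset (Fin (m + 1)))).card :=
        Finset.card_le_card hsub
    _ = n + 1 := by simp [Finset.card_sigma]

lemma framing_norm_sum_le (e : ℕ → H) (he : Orthonormal ℂ e) (c : ℕ → ℂ)
    (t : Finset FramingIndex) :
    ‖∑ j ∈ t, ((((j.1 : ℝ) + 1)⁻¹ : ℂ) * c j.1) • e j.1‖ ^ 2
      ≤ ∑ n ∈ t.image Sigma.fst, ‖c n‖ ^ 2 := by
  classical
  have hmaps : ∀ j ∈ t, Sigma.fst j ∈ t.image Sigma.fst := fun j hj =>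
    Finset.mem_image_of_mem _ hj
  rw [← Finset.sum_fiberwise_of_maps_to hmaps]
  have hconst : ∀ n ∈ t.image Sigma.fst,
      ∑ j ∈ t.filter (fun j => j.1 = n), ((((j.1 : ℝ) + 1)⁻¹ : ℂ) * c j.1) • e j.1
        = ((((t.filter fun j => j.1 = n).card : ℂ) * ((((n : ℝ) + 1)⁻¹ : ℂ) * c n)) • e n) := by
    intro n _
    rw [Finset.sum_congr rfl (fun j hj => by rw [(Finset.mem_filter.mp hj).2]),
      Finset.sum_const, ← Nat.cast_smul_eq_nsmul ℂ, smul_smul]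
  rw [Finset.sum_congr rfl hconst]
  have hns := he.orthogonalFamily.norm_sum
    (fun n => ((t.filter fun j => j.1 = n).card : ℂ) * ((((n : ℝ) + 1)⁻¹ : ℂ) * c n))
    (t.image Sigma.fst)
  simp only [LinearIsometry.toSpanSingleton_apply] at hns
  rw [hns]
  apply Finset.sum_le_sum
  intro n _
  have hpos : (0:ℝ) < (n:ℝ) + 1 := by positivity
  have hcard : ((t.filter fun j => j.1 = n).card : ℝ) ≤ (n : ℝ) + 1 := by
    exact_mod_cast framing_card_filter_le t n
  have hfac : ((t.filter fun j => j.1 = n).card : ℝ) * ((n:ℝ)+1)⁻¹ ≤ 1 := by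
    calc ((t.filter fun j => j.1 = n).card : ℝ) * ((n:ℝ)+1)⁻¹
        ≤ ((n:ℝ)+1) * ((n:ℝ)+1)⁻¹ := mul_le_mul_of_nonneg_right hcard (by positivity)
      _ = 1 := mul_inv_cancel₀ hpos.ne'
  have h1 : ‖((t.filter fun j => j.1 = n).card : ℂ) * (((((n:ℝ):ℂ)) + 1)⁻¹ * c n)‖ ≤ ‖c n‖ := by
    rw [norm_mul, norm_mul, norm_inv]
    have e1 : ‖(((t.filter fun j => j.1 = n).card : ℕ) : ℂ)‖
        = ((t.filter fun j => j.1 = n).card : ℝ) := Complex.norm_natCast _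
    have e2 : ‖(((n:ℝ):ℂ) + 1)‖ = (n:ℝ)+1 := by
      have h : (((n:ℝ):ℂ) + 1) = ((((n:ℝ)+1 : ℝ)) : ℂ) := by push_cast; ring
      rw [h, Complex.norm_real, Real.norm_eq_abs, abs_of_nonneg hpos.le]
    rw [e1, e2]
    nlinarith [norm_nonneg (c n), hfac, inv_nonneg.mpr hpos.le,
      Nat.cast_nonneg (α := ℝ) (t.filter fun j => j.1 = n).card]
  exact pow_le_pow_left₀ (norm_nonneg _) h1 2

end aux

section aux2
variable {H : Type*} [NormedAddCommGroup H] [InnerProductSpace ℂ H] [CompleteSpace H]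

lemma framing_summable (e : ℕ → H) (he : Orthonormal ℂ e) (v : H) :
    Summable (fun j : FramingIndex =>
      ((((j.1 : ℝ) + 1)⁻¹ : ℂ) * (inner ℂ (e j.1) v : ℂ)) • e j.1) := by
  classical
  rw [summable_iff_vanishing]
  intro V hV
  obtain ⟨ε, hε, hball⟩ := Metric.mem_nhds_iff.mp hV
  have hb : Summable (fun n => ‖(inner ℂ (e n) v : ℂ)‖ ^ 2) := he.inner_products_summable v
  obtain ⟨u, hu⟩ := summable_iff_vanishing.mp hb (Set.Iio (ε ^ 2))
    (Iio_mem_nhds (by positivity))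
  refine ⟨u.sigma fun n => Finset.univ, fun t ht => ?_⟩
  apply hball
  rw [Metric.mem_ball, dist_zero_right]
  have himg : Disjoint (t.image Sigma.fst) u := by
    rw [Finset.disjoint_left]
    rintro n hn hnu
    obtain ⟨j, hj, rfl⟩ := Finset.mem_image.mp hn
    exact (Finset.disjoint_left.mp ht hj) (Finset.mem_sigma.mpr ⟨hnu, Finset.mem_univ _⟩)
  have h1 := framing_norm_sum_le e he (fun n => (inner ℂ (e n) v : ℂ)) t
  have h2 : ∑ n ∈ t.image Sigma.fst, ‖(inner ℂ (e n) v : ℂ)‖ ^ 2 < ε ^ 2 := hu _ himg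
  exact lt_of_pow_lt_pow_left₀ 2 hε.le (lt_of_le_of_lt h1 h2)

lemma framing_hasSum (e : ℕ → H) (he : Orthonormal ℂ e)
    (hcomplete : (Submodule.span ℂ (Set.range e)).topologicalClosure = ⊤) (v : H) :
    HasSum (fun j : FramingIndex =>
      ((((j.1 : ℝ) + 1)⁻¹ : ℂ) * (inner ℂ (e j.1) v : ℂ)) • e j.1) v := by
  classical
  have hbasis : HasSum (fun n => (inner ℂ (e n) v : ℂ) • e n) v := by
    have hc : ∀ i, (HilbertBasis.mk he (le_of_eq hcomplete.symm)) i = e i :=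
      fun i => congrFun (HilbertBasis.coe_mk he (le_of_eq hcomplete.symm)) i
    have h := (HilbertBasis.mk he (le_of_eq hcomplete.symm)).hasSum_repr v
    have heq : (fun i => (HilbertBasis.mk he (le_of_eq hcomplete.symm)).repr v i
        • (HilbertBasis.mk he (le_of_eq hcomplete.symm)) i)
        = fun i => (inner ℂ (e i) v : ℂ) • e i :=
      funext fun i => by rw [HilbertBasis.repr_apply_apply, hc i]
    rwa [heq] at h
  have hfiber : ∀ n : ℕ, HasSum
      (fun c : Fin (n + 1) =>
        ((((n : ℝ) + 1)⁻¹ : ℂ) * (inner ℂ (e n) v : ℂ)) • e n)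
      ((inner ℂ (e n) v : ℂ) • e n) := by
    intro n
    have h := hasSum_fintype (fun c : Fin (n + 1) =>
      ((((n : ℝ) + 1)⁻¹ : ℂ) * (inner ℂ (e n) v : ℂ)) • e n)
    convert h using 1
    rw [Finset.sum_const, Finset.card_univ, Fintype.card_fin,
      ← Nat.cast_smul_eq_nsmul ℂ, smul_smul, ← mul_assoc]
    congr 1
    have hne : (((n : ℝ) : ℂ) + 1) ≠ 0 := by
      intro h0
      have := congrArg Complex.re h0
      simp at this
      linarith [Nat.cast_nonneg (α := ℝ) n]
    have : ((n + 1 : ℕ) : ℂ) = (((n : ℝ) : ℂ) + 1) := by push_cast; ring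
    rw [this, mul_inv_cancel₀ hne, one_mul]
  obtain ⟨L, hL⟩ := framing_summable e he v
  have hg : HasSum (fun n => (inner ℂ (e n) v : ℂ) • e n) L :=
    hL.sigma (fun n => hfiber n)
  rwa [hg.unique hbasis] at hL

end aux2

section aux3
variable {H : Type*} [NormedAddCommGroup H] [InnerProductSpace ℂ H]

lemma framing_norm_inv (m : ℕ) : ‖((((m : ℝ) : ℂ)) + 1)⁻¹‖ = ((m : ℝ) + 1)⁻¹ := by
  rw [norm_inv]
  have h : (((m : ℝ) : ℂ) + 1) = ((((m : ℝ) + 1 : ℝ)) : ℂ) := by push_cast; ring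
  rw [h, Complex.norm_real, Real.norm_eq_abs, abs_of_nonneg (by positivity)]

lemma framing_scalar_sum_le (e : ℕ → H) (he : Orthonormal ℂ e) (v : H)
    (s : Finset FramingIndex) :
    ∑ j ∈ s, (((j.1 : ℝ) + 1)⁻¹) ^ 2 * ‖(inner ℂ (e j.1) v : ℂ)‖ ^ 2 ≤ ‖v‖ ^ 2 := by
  classical
  rw [← Finset.sum_fiberwise_of_maps_to
    (fun j hj => Finset.mem_image_of_mem Sigma.fst hj)]
  have hb : ∀ n ∈ s.image Sigma.fst,
      ∑ j ∈ s.filter (fun j => j.1 = n),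
        (((j.1 : ℝ) + 1)⁻¹) ^ 2 * ‖(inner ℂ (e j.1) v : ℂ)‖ ^ 2
        ≤ ‖(inner ℂ (e n) v : ℂ)‖ ^ 2 := by
    intro n _
    rw [Finset.sum_congr rfl (fun j hj => by rw [(Finset.mem_filter.mp hj).2]),
      Finset.sum_const, nsmul_eq_mul]
    have hcard : ((s.filter fun j => j.1 = n).card : ℝ) ≤ (n : ℝ) + 1 := by
      exact_mod_cast framing_card_filter_le s n
    have hk : (0:ℝ) ≤ ((s.filter fun j => j.1 = n).card : ℝ) := Nat.cast_nonneg _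
    have hpos : (0:ℝ) < (n : ℝ) + 1 := by positivity
    have hinv : (0:ℝ) ≤ ((n : ℝ) + 1)⁻¹ := by positivity
    have hid : ((n : ℝ) + 1) * ((n : ℝ) + 1)⁻¹ = 1 := mul_inv_cancel₀ hpos.ne'
    have hinvle : ((n : ℝ) + 1)⁻¹ ≤ 1 := by
      rw [inv_le_one_iff₀]; right; linarith
    have ha : (0:ℝ) ≤ ‖(inner ℂ (e n) v : ℂ)‖ ^ 2 := by positivity
    nlinarith [mul_nonneg (mul_nonneg (sub_nonneg.mpr hcard) (mul_nonneg hinv hinv)) ha,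
      mul_nonneg (sub_nonneg.mpr hinvle) ha]
  calc ∑ n ∈ s.image Sigma.fst, ∑ j ∈ s.filter (fun j => j.1 = n),
        (((j.1 : ℝ) + 1)⁻¹) ^ 2 * ‖(inner ℂ (e j.1) v : ℂ)‖ ^ 2
      ≤ ∑ n ∈ s.image Sigma.fst, ‖(inner ℂ (e n) v : ℂ)‖ ^ 2 := Finset.sum_le_sum hb
    _ ≤ ‖v‖ ^ 2 := he.sum_inner_products_le v

end aux3

/-- Let `(e_n)_{n ∈ ℕ}` be an orthonormal basis of a separable Hilbert space `H`.
Let `(x_j)` list `e_n` with multiplicity `n + 1` and `(y_j)` list `(n+1)⁻¹ • e_n`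
with multiplicity `n + 1`.  Then:
(a) `(x_j, y_j)` is a framing (`v = Σ_j ⟨v, y_j⟩ x_j` unconditionally) with
    `‖x_j‖ ≤ 1` and `‖y_j‖ ≤ 1`;
(b) `Σ_j |⟨e_n, x_j⟩|² = n + 1` for every `n`, and `(x_j)` is not a Bessel sequence;
(c) `Σ_j |⟨e_n, y_j⟩|² = (n+1)⁻¹` for every `n`, and `(y_j)` is a Bessel sequence
    but not a frame. -/
theorem stmt9 {H : Type*} [NormedAddCommGroup H] [InnerProductSpace ℂ H] [CompleteSpace H]
    (e : ℕ → H) (he : Orthonormal ℂ e)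
    (hcomplete : (Submodule.span ℂ (Set.range e)).topologicalClosure = ⊤)
    (x y : FramingIndex → H)
    (hx : ∀ j : FramingIndex, x j = e j.1)
    (hy : ∀ j : FramingIndex, y j = (((j.1 : ℝ) + 1)⁻¹ : ℂ) • e j.1) :
    -- (a)
    (∀ v : H, HasSum (fun j => (inner ℂ (y j) v : ℂ) • x j) v) ∧
    (∀ j, ‖x j‖ ≤ 1) ∧ (∀ j, ‖y j‖ ≤ 1) ∧
    -- (b)
    (∀ n : ℕ, ∑' j : FramingIndex, ‖(inner ℂ (x j) (e n) : ℂ)‖ ^ 2 = (n : ℝ) + 1) ∧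
    ¬ (∃ B : ℝ, ∀ (v : H) (s : Finset FramingIndex),
        ∑ j ∈ s, ‖(inner ℂ (x j) v : ℂ)‖ ^ 2 ≤ B * ‖v‖ ^ 2) ∧
    -- (c)
    (∀ n : ℕ, ∑' j : FramingIndex, ‖(inner ℂ (y j) (e n) : ℂ)‖ ^ 2 = ((n : ℝ) + 1)⁻¹) ∧
    (∃ C : ℝ, ∀ (v : H) (s : Finset FramingIndex),
        ∑ j ∈ s, ‖(inner ℂ (y j) v : ℂ)‖ ^ 2 ≤ C * ‖v‖ ^ 2) ∧
    ¬ (∃ A : ℝ, 0 < A ∧ ∀ v : H,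
        A * ‖v‖ ^ 2 ≤ ∑' j : FramingIndex, ‖(inner ℂ (y j) v : ℂ)‖ ^ 2) := by
  classical
  have hite : ∀ i j : ℕ, (inner ℂ (e i) (e j) : ℂ) = if i = j then 1 else 0 :=
    orthonormal_iff_ite.mp he
  have hconj : ∀ m : ℕ, (starRingEnd ℂ) ((((m : ℝ) : ℂ)) + 1)⁻¹ = ((((m : ℝ) : ℂ)) + 1)⁻¹ := by
    intro m
    rw [map_inv₀, map_add, Complex.conj_ofReal, map_one]
  have hinner_y : ∀ (j : FramingIndex) (w : H),
      (inner ℂ (y j) w : ℂ) = ((((j.1 : ℝ) : ℂ)) + 1)⁻¹ * (inner ℂ (e j.1) w : ℂ) := by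
    intro j w
    rw [hy j, inner_smul_left, hconj]
  -- (a)
  have ha : ∀ v : H, HasSum (fun j : FramingIndex => (inner ℂ (y j) v : ℂ) • x j) v := by
    intro v
    have h := framing_hasSum e he hcomplete v
    have heq : (fun j : FramingIndex => (inner ℂ (y j) v : ℂ) • x j)
        = fun j : FramingIndex =>
          ((((j.1 : ℝ) + 1)⁻¹ : ℂ) * (inner ℂ (e j.1) v : ℂ)) • e j.1 := by
      funext j
      rw [hx j, hinner_y j v]
    rwa [heq]
  refine ⟨ha, ?_, ?_, ?_, ?_, ?_, ?_, ?_⟩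
  · intro j; rw [hx j, he.1 j.1]
  · intro j
    rw [hy j, norm_smul, he.1 j.1, mul_one, framing_norm_inv]
    rw [inv_le_one_iff₀]; right
    have : (0:ℝ) ≤ (j.1 : ℝ) := Nat.cast_nonneg _
    linarith
  -- (b) tsum
  all_goals
    have keyx : ∀ n : ℕ,
        ∑ j ∈ (({n} : Finset ℕ).sigma fun m => (Finset.univ : Finset (Fin (m + 1)))),
          ‖(inner ℂ (x j) (e n) : ℂ)‖ ^ 2 = (n : ℝ) + 1 := by
      intro n
      rw [Finset.sum_sigma]
      simp only [Finset.sum_singleton]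
      have : ∀ c : Fin (n + 1), ‖(inner ℂ (x ⟨n, c⟩) (e n) : ℂ)‖ ^ 2 = 1 := by
        intro c
        rw [hx ⟨n, c⟩]
        simp [hite n n, he.1 n]
      rw [Finset.sum_congr rfl (fun c _ => this c), Finset.sum_const, Finset.card_univ,
        Fintype.card_fin, nsmul_eq_mul, mul_one]
      push_cast; ring
  all_goals
    have hzerox : ∀ n : ℕ, ∀ j : FramingIndex,
        j ∉ (({n} : Finset ℕ).sigma fun m => (Finset.univ : Finset (Fin (m + 1)))) →
        ‖(inner ℂ (x j) (e n) : ℂ)‖ ^ 2 = 0 := by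
      intro n j hj
      have hne : j.1 ≠ n := by
        intro h
        exact hj (Finset.mem_sigma.mpr ⟨Finset.mem_singleton.mpr h, Finset.mem_univ _⟩)
      rw [hx j]
      simp [hite j.1 n, hne]
  · intro n
    rw [tsum_eq_sum (hzerox n), keyx n]
  -- (b) not Bessel
  · rintro ⟨B, hB⟩
    obtain ⟨m, hm⟩ := exists_nat_gt B
    have h := hB (e m) (({m} : Finset ℕ).sigma fun k => (Finset.univ : Finset (Fin (k + 1))))
    rw [keyx m, he.1 m] at h
    norm_num at h
    have : (m : ℝ) < (m : ℝ) + 1 := lt_add_one _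
    linarith
  -- (c) tsum
  all_goals
    have keyy : ∀ n : ℕ,
        ∑' j : FramingIndex, ‖(inner ℂ (y j) (e n) : ℂ)‖ ^ 2 = ((n : ℝ) + 1)⁻¹ := by
      intro n
      have hzeroy : ∀ j : FramingIndex,
          j ∉ (({n} : Finset ℕ).sigma fun m => (Finset.univ : Finset (Fin (m + 1)))) →
          ‖(inner ℂ (y j) (e n) : ℂ)‖ ^ 2 = 0 := by
        intro j hj
        have hne : j.1 ≠ n := by
          intro h
          exact hj (Finset.mem_sigma.mpr ⟨Finset.mem_singleton.mpr h, Finset.mem_univ _⟩)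
        rw [hinner_y j (e n)]
        simp [hite j.1 n, hne]
      rw [tsum_eq_sum hzeroy, Finset.sum_sigma]
      simp only [Finset.sum_singleton]
      have hterm : ∀ c : Fin (n + 1),
          ‖(inner ℂ (y ⟨n, c⟩) (e n) : ℂ)‖ ^ 2 = (((n : ℝ) + 1)⁻¹) ^ 2 := by
        intro c
        rw [hinner_y ⟨n, c⟩ (e n)]
        simp [hite n n, he.1 n, norm_mul, framing_norm_inv, mul_pow]
        congr 1
        rw [show ((n : ℂ) + 1) = (((n + 1 : ℕ)) : ℂ) from by push_cast; ring,
          Complex.norm_natCast]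
        push_cast; ring
      rw [Finset.sum_congr rfl (fun c _ => hterm c), Finset.sum_const, Finset.card_univ,
        Fintype.card_fin, nsmul_eq_mul]
      have hpos : (0:ℝ) < (n : ℝ) + 1 := by positivity
      have : ((n + 1 : ℕ) : ℝ) = (n : ℝ) + 1 := by push_cast; ring
      rw [this]
      field_simp
  · intro n; exact keyy n
  -- (c) Bessel
  · refine ⟨1, fun v s => ?_⟩
    rw [one_mul]
    have heq : ∀ j ∈ s, ‖(inner ℂ (y j) v : ℂ)‖ ^ 2
        = (((j.1 : ℝ) + 1)⁻¹) ^ 2 * ‖(inner ℂ (e j.1) v : ℂ)‖ ^ 2 := by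
      intro j _
      rw [hinner_y j v, norm_mul, mul_pow, framing_norm_inv]
    rw [Finset.sum_congr rfl heq]
    exact framing_scalar_sum_le e he v s
  -- (c) not frame
  · rintro ⟨A, hA, hAle⟩
    obtain ⟨m, hm⟩ := exists_nat_gt A⁻¹
    have h := hAle (e m)
    rw [keyy m, he.1 m] at h
    norm_num at h
    have h2 : ((m : ℝ) + 1)⁻¹ < A := by
      have hm1 : A⁻¹ < (m : ℝ) + 1 := lt_trans hm (lt_add_one _)
      calc ((m : ℝ) + 1)⁻¹ < (A⁻¹)⁻¹ := by
            apply inv_strictAnti₀ (inv_pos.mpr hA) hm1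
        _ = A := inv_inv A
    linarith
end

section
/- If Σ_{i∈ℕ} z_i converges unconditionally in a Hilbert space H, then Σ_{i∈ℕ} ‖z_i‖² < ∞. -/
open Finset in
lemma stmt12_signs {H : Type*} [NormedAddCommGroup H] [InnerProductSpace ℂ H]
    (z : ℕ → H) (F : Finset ℕ) :
    ∃ ε : ℕ → ℂ, (∀ i, ε i = 1 ∨ ε i = -1) ∧
      ∑ i ∈ F, ‖z i‖ ^ 2 ≤ ‖∑ i ∈ F, ε i • z i‖ ^ 2 := by
  classical
  induction F using Finset.induction with
  | empty => exact ⟨fun _ => 1, fun _ => Or.inl rfl, by simp⟩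
  | insert a F ha ih =>
    obtain ⟨ε, hε, hle⟩ := ih
    set v := ∑ i ∈ F, ε i • z i with hv
    set c : ℂ := if 0 ≤ (inner ℂ v (z a) : ℂ).re then 1 else -1 with hc
    refine ⟨Function.update ε a c, ?_, ?_⟩
    · intro i
      by_cases hi : i = a
      · subst hi; simp only [Function.update_self, hc]
        split <;> simp
      · simp only [Function.update_of_ne hi]; exact hε i
    · have hupd : ∑ i ∈ F, Function.update ε a c i • z i = v := by
        rw [hv]
        exact Finset.sum_congr rfl fun i hi => by
          rw [Function.update_of_ne (by rintro rfl; exact ha hi)]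
      rw [Finset.sum_insert ha, Finset.sum_insert ha, Function.update_self, hupd]
      have hexp : ‖c • z a + v‖ ^ 2 = ‖c • z a‖ ^ 2 + 2 * (inner ℂ (c • z a) v : ℂ).re + ‖v‖ ^ 2 := by
        have := norm_add_sq (𝕜 := ℂ) (c • z a) v
        simpa only [RCLike.re_to_complex] using this
      have hcnorm : ‖c • z a‖ = ‖z a‖ := by
        rw [norm_smul]
        have : ‖c‖ = 1 := by rw [hc]; split <;> simp
        rw [this, one_mul]
      have hre : 0 ≤ (inner ℂ (c • z a) v : ℂ).re := by
        rw [inner_smul_left]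
        have hconj : (starRingEnd ℂ) c = c := by rw [hc]; split <;> simp
        rw [hconj]
        have hsym : (inner ℂ (z a) v : ℂ).re = (inner ℂ v (z a) : ℂ).re := by
          have := inner_re_symm (𝕜 := ℂ) (z a) v
          simpa [RCLike.re_to_complex] using this
        by_cases hpos : 0 ≤ (inner ℂ v (z a) : ℂ).re
        · simp only [hc, if_pos hpos, one_mul]; rw [hsym]; exact hpos
        · simp only [hc, if_neg hpos, neg_one_mul, Complex.neg_re]
          rw [hsym]; linarith [lt_of_not_ge hpos]
      rw [hexp, hcnorm]
      nlinarith [hle, norm_nonneg v, norm_nonneg (z a)]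

/-- If `Σ_i z_i` converges unconditionally in a Hilbert space `H` (i.e. the family
`z` has a sum), then `Σ_i ‖z_i‖² < ∞`. -/
theorem stmt12 {H : Type*} [NormedAddCommGroup H] [InnerProductSpace ℂ H] [CompleteSpace H]
    (z : ℕ → H) (s : H) (h : HasSum z s) :
    Summable (fun i => ‖z i‖ ^ 2) := by
  classical
  -- get a uniform bound on all finite partial sums
  obtain ⟨F₀, hF₀⟩ : ∃ F₀ : Finset ℕ, ∀ F ⊇ F₀, dist (∑ i ∈ F, z i) s < 1 := by
    have := Metric.tendsto_atTop.mp h 1 one_pos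
    obtain ⟨F₀, hF₀⟩ := this
    exact ⟨F₀, fun F hF => hF₀ F hF⟩
  set C : ℝ := ‖s‖ + 1 + ∑ i ∈ F₀, ‖z i‖ with hC
  have hCb : ∀ F : Finset ℕ, ‖∑ i ∈ F, z i‖ ≤ C := by
    intro F
    have hsplit : ∑ i ∈ F ∪ F₀, z i = ∑ i ∈ F, z i + ∑ i ∈ F₀ \ F, z i := by
      rw [← Finset.sum_union (Finset.disjoint_sdiff)]
      exact Finset.sum_congr (by rw [Finset.union_sdiff_self_eq_union]) fun _ _ => rfl
    have h1 : ‖∑ i ∈ F ∪ F₀, z i‖ ≤ ‖s‖ + 1 := by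
      have := hF₀ (F ∪ F₀) Finset.subset_union_right
      rw [dist_eq_norm] at this
      calc ‖∑ i ∈ F ∪ F₀, z i‖ = ‖(∑ i ∈ F ∪ F₀, z i - s) + s‖ := by rw [sub_add_cancel]
        _ ≤ ‖∑ i ∈ F ∪ F₀, z i - s‖ + ‖s‖ := norm_add_le _ _
        _ ≤ ‖s‖ + 1 := by linarith
    have h2 : ‖∑ i ∈ F₀ \ F, z i‖ ≤ ∑ i ∈ F₀, ‖z i‖ :=
      le_trans (norm_sum_le _ _) (Finset.sum_le_sum_of_subset_of_nonneg
        (Finset.sdiff_subset) fun _ _ _ => norm_nonneg _)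
    have : ∑ i ∈ F, z i = ∑ i ∈ F ∪ F₀, z i - ∑ i ∈ F₀ \ F, z i := by
      rw [hsplit]; abel
    rw [this]
    calc ‖∑ i ∈ F ∪ F₀, z i - ∑ i ∈ F₀ \ F, z i‖
        ≤ ‖∑ i ∈ F ∪ F₀, z i‖ + ‖∑ i ∈ F₀ \ F, z i‖ := norm_sub_le _ _
      _ ≤ C := by rw [hC]; linarith
  have hC0 : 0 ≤ C := le_trans (norm_nonneg _) (hCb ∅ |>.trans_eq (by simp))
  apply summable_of_sum_le (c := (2 * C) ^ 2)
  · intro i; positivity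
  · intro F
    obtain ⟨ε, hε, hle⟩ := stmt12_signs z F
    refine hle.trans ?_
    have hdecomp : ∑ i ∈ F, ε i • z i =
        ∑ i ∈ F.filter (fun i => ε i = 1), z i - ∑ i ∈ F.filter (fun i => ¬ ε i = 1), z i := by
      rw [← Finset.sum_filter_add_sum_filter_not F (fun i => ε i = 1) (fun i => ε i • z i)]
      rw [sub_eq_add_neg, ← Finset.sum_neg_distrib]
      congr 1
      · exact Finset.sum_congr rfl fun i hi => by
          rw [(Finset.mem_filter.mp hi).2, one_smul]
      · exact Finset.sum_congr rfl fun i hi => by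
          have := (hε i).resolve_left (Finset.mem_filter.mp hi).2
          rw [this, neg_one_smul]
    have hnorm : ‖∑ i ∈ F, ε i • z i‖ ≤ 2 * C := by
      rw [hdecomp]
      calc ‖_ - _‖ ≤ ‖∑ i ∈ F.filter (fun i => ε i = 1), z i‖ +
            ‖∑ i ∈ F.filter (fun i => ¬ ε i = 1), z i‖ := norm_sub_le _ _
        _ ≤ C + C := add_le_add (hCb _) (hCb _)
        _ = 2 * C := by ring
    have := pow_le_pow_left₀ (norm_nonneg _) hnorm 2
    exact this
end

section
/- A pair of sequences (x_i, y_i)_{i∈ℕ} is a framing for a Hilbert space H if and only if (y_i, x_i)_{i∈ℕ} is a framing for H. -/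
set_option linter.unusedSectionVars false
set_option maxHeartbeats 1000000

open Filter

local notation "⟪" a ", " b "⟫" => @inner ℂ _ _ a b

section FramingAux

variable {H : Type*} [NormedAddCommGroup H] [InnerProductSpace ℂ H] [CompleteSpace H]

private lemma framing_scalar_hasSum (x y : ℕ → H)
    (h : ∀ v : H, HasSum (fun i => (⟪y i, v⟫ : ℂ) • x i) v)
    (v w : H) : HasSum (fun i => (⟪y i, v⟫ : ℂ) * ⟪w, x i⟫) ⟪w, v⟫ := by
  have := (innerSL ℂ w).hasSum (h v)
  simpa [inner_smul_right, mul_comm] using this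

private lemma framing_abs_summable (x y : ℕ → H)
    (h : ∀ v : H, HasSum (fun i => (⟪y i, v⟫ : ℂ) • x i) v)
    (v w : H) : Summable (fun i => ‖(⟪x i, v⟫ : ℂ) * ⟪w, y i⟫‖) := by
  have h1 : Summable (fun i => ‖(⟪y i, w⟫ : ℂ) * ⟪v, x i⟫‖) :=
    summable_norm_iff.2 (framing_scalar_hasSum x y h w v).summable
  convert h1 using 2 with i
  rw [norm_mul, norm_mul, norm_inner_symm (x i) v, norm_inner_symm w (y i), mul_comm]

private lemma framing_weak_hasSum (x y : ℕ → H)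
    (h : ∀ v : H, HasSum (fun i => (⟪y i, v⟫ : ℂ) • x i) v)
    (v w : H) : HasSum (fun i => (⟪w, (⟪x i, v⟫ : ℂ) • y i⟫ : ℂ)) ⟪w, v⟫ := by
  have h1 : HasSum (fun i => (⟪y i, w⟫ : ℂ) * ⟪v, x i⟫) ⟪v, w⟫ :=
    framing_scalar_hasSum x y h w v
  have h2 := h1.map (starRingEnd ℂ) (RCLike.continuous_conj)
  simp only [Function.comp_def, map_mul, RingHom.coe_comp] at h2
  convert h2 using 2 with i
  · simp [inner_smul_right, inner_conj_symm, mul_comm]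
  · exact (inner_conj_symm w v).symm

private lemma framing_bdd_partial_sums {E : Type*} [NormedAddCommGroup E] [CompleteSpace E]
    {f : ℕ → E} (hf : Summable f) : ∃ M, ∀ s : Finset ℕ, ‖∑ i ∈ s, f i‖ ≤ M := by
  obtain ⟨s₀, hs₀⟩ :=
    (summable_iff_vanishing.1 hf) (Metric.ball 0 1) (Metric.ball_mem_nhds 0 one_pos)
  refine ⟨(∑ i ∈ s₀, ‖f i‖) + 1, fun s => ?_⟩
  have hsplit : s = (s ∩ s₀) ∪ (s \ s₀) := by
    ext i; simp [Finset.mem_inter, Finset.mem_sdiff]; tauto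
  have hdisj : Disjoint (s ∩ s₀) (s \ s₀) := by
    simp [Finset.disjoint_left, Finset.mem_inter, Finset.mem_sdiff]; tauto
  calc ‖∑ i ∈ s, f i‖ = ‖∑ i ∈ s ∩ s₀, f i + ∑ i ∈ s \ s₀, f i‖ := by
        rw [← Finset.sum_union hdisj, ← hsplit]
    _ ≤ ‖∑ i ∈ s ∩ s₀, f i‖ + ‖∑ i ∈ s \ s₀, f i‖ := norm_add_le _ _
    _ ≤ (∑ i ∈ s₀, ‖f i‖) + 1 := by
        gcongr
        · exact (norm_sum_le _ _).trans (Finset.sum_le_sum_of_subset_of_nonneg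
            (Finset.inter_subset_right) (fun i _ _ => norm_nonneg _))
        · exact le_of_lt (by simpa using hs₀ _ (Finset.sdiff_disjoint))

private noncomputable def framingSF (x y : ℕ → H) (F : Finset ℕ) : H →L[ℂ] H :=
  ∑ i ∈ F, (innerSL ℂ (y i)).smulRight (x i)

private lemma framingSF_apply (x y : ℕ → H) (F : Finset ℕ) (w : H) :
    framingSF x y F w = ∑ i ∈ F, (⟪y i, w⟫ : ℂ) • x i := by
  simp [framingSF, ContinuousLinearMap.sum_apply]

private lemma framing_uniform_bound (x y : ℕ → H)
    (h : ∀ v : H, HasSum (fun i => (⟪y i, v⟫ : ℂ) • x i) v) :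
    ∃ C, 0 ≤ C ∧ ∀ (F : Finset ℕ) (w : H), ‖framingSF x y F w‖ ≤ C * ‖w‖ := by
  have hb : ∀ w : H, ∃ M, ∀ F : Finset ℕ, ‖framingSF x y F w‖ ≤ M := by
    intro w
    obtain ⟨M, hM⟩ := framing_bdd_partial_sums (h w).summable
    exact ⟨M, fun F => by rw [framingSF_apply]; exact hM F⟩
  obtain ⟨C, hC⟩ := banach_steinhaus hb
  refine ⟨max C 0, le_max_right _ _, fun F w => ?_⟩
  calc ‖framingSF x y F w‖ ≤ ‖framingSF x y F‖ * ‖w‖ := (framingSF x y F).le_opNorm w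
    _ ≤ max C 0 * ‖w‖ := by gcongr; exact (hC F).trans (le_max_left _ _)

private lemma framing_exists_sigma (x y : ℕ → H)
    (h : ∀ v : H, HasSum (fun i => (⟪y i, v⟫ : ℂ) • x i) v)
    (C : ℝ) (hC : ∀ (F : Finset ℕ) (w : H), ‖framingSF x y F w‖ ≤ C * ‖w‖)
    {ι : Type} (π : ι → ℕ) (hπ : Function.Injective π) (v : H) :
    ∃ σ : H, ∀ w : H,
      (⟪σ, w⟫ : ℂ) = ∑' b : ι, (⟪(⟪x (π b), v⟫ : ℂ) • y (π b), w⟫ : ℂ) := by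
  have hsum : ∀ w : H, Summable (fun b : ι => (⟪y (π b), w⟫ : ℂ) • x (π b)) := fun w =>
    ((h w).summable.comp_injective hπ)
  set T : H → H := fun w => ∑' b : ι, (⟪y (π b), w⟫ : ℂ) • x (π b) with hT
  have hTbound : ∀ w, ‖T w‖ ≤ C * ‖w‖ := by
    intro w
    have h1 : HasSum (fun b : ι => (⟪y (π b), w⟫ : ℂ) • x (π b)) (T w) := (hsum w).hasSum
    have h2 : Filter.Tendsto (fun s : Finset ι => ‖∑ b ∈ s, (⟪y (π b), w⟫ : ℂ) • x (π b)‖)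
        Filter.atTop (nhds ‖T w‖) := h1.norm
    refine le_of_tendsto h2 (Filter.Eventually.of_forall fun s => ?_)
    calc ‖∑ b ∈ s, (⟪y (π b), w⟫ : ℂ) • x (π b)‖
        = ‖framingSF x y (s.image π) w‖ := by
          rw [framingSF_apply, Finset.sum_image (fun a _ b _ hab => hπ hab)]
      _ ≤ C * ‖w‖ := hC _ w
  have hTadd : ∀ w w', T (w + w') = T w + T w' := by
    intro w w'
    rw [hT]
    simp only [inner_add_right, add_smul]
    exact Summable.tsum_add (hsum w) (hsum w')
  have hTsmul : ∀ (c : ℂ) (w : H), T (c • w) = c • T w := by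
    intro c w
    rw [hT]
    simp only [inner_smul_right, mul_smul]
    exact ((hsum w).hasSum.const_smul c).tsum_eq
  let L : H →ₗ[ℂ] ℂ :=
    { toFun := fun w => ⟪v, T w⟫
      map_add' := fun w w' => by
        show (⟪v, T (w + w')⟫ : ℂ) = (⟪v, T w⟫ : ℂ) + (⟪v, T w'⟫ : ℂ)
        rw [hTadd, inner_add_right]
      map_smul' := fun c w => by
        show (⟪v, T (c • w)⟫ : ℂ) = c • (⟪v, T w⟫ : ℂ)
        rw [hTsmul, inner_smul_right]; rfl }
  have hLbound : ∀ w, ‖L w‖ ≤ (‖v‖ * C) * ‖w‖ := by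
    intro w
    calc ‖(⟪v, T w⟫ : ℂ)‖ ≤ ‖v‖ * ‖T w‖ := norm_inner_le_norm v (T w)
      _ ≤ ‖v‖ * (C * ‖w‖) := by gcongr; exact hTbound w
      _ = (‖v‖ * C) * ‖w‖ := by ring
  let G : H →L[ℂ] ℂ := L.mkContinuous (‖v‖ * C) hLbound
  refine ⟨(InnerProductSpace.toDual ℂ H).symm G, fun w => ?_⟩
  rw [InnerProductSpace.toDual_symm_apply]
  show (⟪v, T w⟫ : ℂ) = _
  have h3 : HasSum (fun b : ι => (⟪v, (⟪y (π b), w⟫ : ℂ) • x (π b)⟫ : ℂ)) ⟪v, T w⟫ :=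
    (innerSL ℂ v).hasSum (hsum w).hasSum
  rw [← h3.tsum_eq]
  congr 1 with b
  rw [inner_smul_right, inner_smul_left, inner_conj_symm]
  ring

private lemma framing_summable_s13 (x y : ℕ → H)
    (h : ∀ v : H, HasSum (fun i => (⟪y i, v⟫ : ℂ) • x i) v) (v : H) :
    Summable (fun i => (⟪x i, v⟫ : ℂ) • y i) := by
  classical
  set a : ℕ → H := fun i => (⟪x i, v⟫ : ℂ) • y i with ha
  have habs : ∀ w : H, Summable (fun i => ‖(⟪w, a i⟫ : ℂ)‖) := by
    intro w
    have := framing_abs_summable x y h v w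
    convert this using 2 with i
    rw [ha]; simp [inner_smul_right]
  by_contra hns
  rw [summable_iff_vanishing] at hns
  push_neg at hns
  obtain ⟨e, he, hfail⟩ := hns
  obtain ⟨ε, hε, hball⟩ := Metric.mem_nhds_iff.1 he
  have hpick : ∀ s : Finset ℕ, ∃ t : Finset ℕ, Disjoint t s ∧ ε ≤ ‖∑ i ∈ t, a i‖ := by
    intro s
    obtain ⟨t, htd, hte⟩ := hfail s
    refine ⟨t, htd, ?_⟩
    by_contra hlt
    push_neg at hlt
    exact hte (hball (by simpa [Metric.mem_ball, dist_zero_right] using hlt))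
  choose pick hpick1 hpick2 using hpick
  -- the blocks
  set aux : ℕ → Finset ℕ × Finset ℕ := fun n =>
    Nat.rec (motive := fun _ => Finset ℕ × Finset ℕ) (pick ∅, pick ∅)
      (fun n p => (pick (p.2 ∪ Finset.range (n + 1)),
        (p.2 ∪ Finset.range (n + 1)) ∪ pick (p.2 ∪ Finset.range (n + 1)))) n with haux
  set F : ℕ → Finset ℕ := fun n => (aux n).1 with hF
  have hauxs : ∀ n, aux (n + 1) = (pick ((aux n).2 ∪ Finset.range (n + 1)),
      ((aux n).2 ∪ Finset.range (n + 1)) ∪ pick ((aux n).2 ∪ Finset.range (n + 1))) :=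
    fun n => rfl
  have hFs : ∀ n, F (n + 1) = pick ((aux n).2 ∪ Finset.range (n + 1)) :=
    fun n => congrArg Prod.fst (hauxs n)
  have hFsub : ∀ n, F n ⊆ (aux n).2 := by
    intro n
    cases n with
    | zero => exact subset_rfl
    | succ n => rw [hFs n, hauxs n]; exact Finset.subset_union_right
  have hmono : ∀ m n, m ≤ n → (aux m).2 ⊆ (aux n).2 := by
    intro m n hmn
    induction n with
    | zero => simpa [Nat.le_zero.1 hmn]
    | succ n ih =>
      rcases Nat.lt_or_ge m (n + 1) with h1 | h1
      · refine (ih (Nat.lt_succ_iff.1 h1)).trans ?_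
        rw [hauxs n]
        exact Finset.Subset.trans Finset.subset_union_left Finset.subset_union_left
      · have : m = n + 1 := le_antisymm hmn h1
        subst this; exact subset_rfl
  have hge : ∀ n i, i ∈ F n → n ≤ i := by
    intro n i hi
    cases n with
    | zero => exact Nat.zero_le i
    | succ n =>
      have hd : Disjoint (F (n + 1)) ((aux n).2 ∪ Finset.range (n + 1)) := by
        rw [hFs n]; exact hpick1 _
      have : i ∉ Finset.range (n + 1) :=
        fun hmem => (Finset.disjoint_left.1 hd) hi (Finset.mem_union_right _ hmem)
      simpa [Finset.mem_range, Nat.lt_succ_iff] using this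
  have hdisj : ∀ m n, m < n → Disjoint (F m) (F n) := by
    intro m n hmn
    cases n with
    | zero => exact absurd hmn (Nat.not_lt_zero m)
    | succ n =>
      have hd : Disjoint (F (n + 1)) ((aux n).2 ∪ Finset.range (n + 1)) := by
        rw [hFs n]; exact hpick1 _
      have hsub : F m ⊆ (aux n).2 := (hFsub m).trans (hmono m n (Nat.lt_succ_iff.1 hmn))
      exact (hd.mono_right (hsub.trans Finset.subset_union_left)).symm
  have hnorm : ∀ n, ε ≤ ‖∑ i ∈ F n, a i‖ := by
    intro n
    cases n with
    | zero => exact hpick2 ∅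
    | succ n => rw [hFs n]; exact hpick2 _
  set u : ℕ → H := fun n => ∑ i ∈ F n, a i with hu
  -- weak null sequence
  have hweak : ∀ w : H, Tendsto (fun n => (⟪w, u n⟫ : ℂ)) atTop (nhds 0) := by
    intro w
    apply squeeze_zero_norm (a := fun n => ∑' k : ℕ, ‖(⟪w, a (k + n)⟫ : ℂ)‖)
      ?_ (tendsto_sum_nat_add (fun i => ‖(⟪w, a i⟫ : ℂ)‖))
    intro n
    have h1 : (⟪w, u n⟫ : ℂ) = ∑ i ∈ F n, (⟪w, a i⟫ : ℂ) := inner_sum _ _ _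
    rw [h1]
    refine (norm_sum_le _ _).trans ?_
    have hinj : ∀ i ∈ F n, ∀ j ∈ F n, i - n = j - n → i = j := by
      intro i hi j hj hij
      have := hge n i hi; have := hge n j hj; omega
    have himg : ∑ i ∈ F n, ‖(⟪w, a i⟫ : ℂ)‖
        = ∑ j ∈ (F n).image (· - n), ‖(⟪w, a (j + n)⟫ : ℂ)‖ := by
      rw [Finset.sum_image hinj]
      refine Finset.sum_congr rfl fun i hi => ?_
      rw [Nat.sub_add_cancel (hge n i hi)]
    rw [himg]
    exact Summable.sum_le_tsum _ (fun _ _ => norm_nonneg _) ((summable_nat_add_iff n).2 (habs w))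
  -- the almost-orthogonal subsequence
  set b : ℕ → ℝ := fun n => ε ^ 2 * (1 / 4 : ℝ) ^ n / 16 with hb
  have hbpos : ∀ n, 0 < b n := fun n => by positivity
  have hchoice : ∀ (m : ℕ) (δ : ℝ), 0 < δ →
      ∃ N, m < N ∧ ∀ j ≤ m, ‖(⟪u j, u N⟫ : ℂ)‖ ≤ δ := by
    intro m δ hδ
    have h1 : ∀ j : ℕ, ∀ᶠ N in atTop, ‖(⟪u j, u N⟫ : ℂ)‖ ≤ δ := by
      intro j
      obtain ⟨N₀, hN₀⟩ := Metric.tendsto_atTop.1 (hweak (u j)) δ hδ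
      refine eventually_atTop.2 ⟨N₀, fun N hN => ?_⟩
      have := hN₀ N hN
      rw [dist_zero_right] at this
      exact this.le
    have h2 : ∀ᶠ N in atTop, ∀ j ∈ Finset.range (m + 1), ‖(⟪u j, u N⟫ : ℂ)‖ ≤ δ :=
      (Finset.range (m + 1)).eventually_all.2 fun j _ => h1 j
    obtain ⟨N, hN1, hN2⟩ := (h2.and (eventually_gt_atTop m)).exists
    exact ⟨N, hN2, fun j hj => hN1 j (Finset.mem_range.2 (Nat.lt_succ_of_le hj))⟩
  set k : ℕ → ℕ := fun n => Nat.rec (motive := fun _ => ℕ) 0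
    (fun n kn => (hchoice kn (b (n + 1)) (hbpos _)).choose) n with hk
  have hks : ∀ n, k (n + 1) = (hchoice (k n) (b (n + 1)) (hbpos _)).choose := fun n => rfl
  have hkmono : StrictMono k := by
    apply strictMono_nat_of_lt_succ
    intro n
    rw [hks n]
    exact (hchoice (k n) (b (n + 1)) (hbpos _)).choose_spec.1
  have hksmall : ∀ m n, m < n → ‖(⟪u (k m), u (k n)⟫ : ℂ)‖ ≤ b n := by
    intro m n hmn
    cases n with
    | zero => exact absurd hmn (Nat.not_lt_zero m)
    | succ n =>
      have hm : k m ≤ k n := hkmono.monotone (Nat.lt_succ_iff.1 hmn)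
      have := (hchoice (k n) (b (n + 1)) (hbpos _)).choose_spec.2 (k m) hm
      rw [hks n]
      exact this
  -- the sigma type and the weak limit vector σ
  obtain ⟨C, hC0, hC⟩ := framing_uniform_bound x y h
  set ι : Type := Σ n : ℕ, {i : ℕ // i ∈ F (k n)} with hι
  set π : ι → ℕ := fun p => p.2.1 with hπdef
  have hπ : Function.Injective π := by
    rintro ⟨m, i, hi⟩ ⟨n, j, hj⟩ hij
    simp only [hπdef] at hij
    have hmn : m = n := by
      by_contra hne
      rcases Nat.lt_or_ge m n with h1 | h1
      · exact (Finset.disjoint_left.1 (hdisj (k m) (k n) (hkmono h1))) hi (hij ▸ hj)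
      · have h2 : n < m := lt_of_le_of_ne h1 (Ne.symm hne)
        exact (Finset.disjoint_left.1 (hdisj (k n) (k m) (hkmono h2))) hj (hij ▸ hi)
    subst hmn
    have : (⟨i, hi⟩ : {i : ℕ // i ∈ F (k m)}) = ⟨j, hj⟩ := Subtype.ext hij
    rw [this]
  obtain ⟨σ, hσ⟩ := framing_exists_sigma x y h C hC π hπ v
  -- summability of the scalar family over ι
  have hsι : ∀ w : H, Summable (fun p : ι => (⟪a (π p), w⟫ : ℂ)) := by
    intro w
    have h1 : Summable (fun i : ℕ => (⟪a i, w⟫ : ℂ)) := by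
      apply Summable.of_norm
      have := habs w
      refine this.congr fun i => ?_
      rw [norm_inner_symm]
    exact h1.comp_injective hπ
  have hrow : ∀ (n : ℕ) (w : H),
      ∑' c : {i : ℕ // i ∈ F (k n)}, (⟪a c.1, w⟫ : ℂ) = ⟪u (k n), w⟫ := by
    intro n w
    rw [tsum_fintype, Finset.univ_eq_attach, Finset.sum_attach (F (k n)) (fun i => (⟪a i, w⟫ : ℂ)),
      hu, sum_inner]
  have hkey : ∀ m, (⟪σ, u (k m)⟫ : ℂ) = ∑' n : ℕ, (⟪u (k n), u (k m)⟫ : ℂ) := by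
    intro m
    rw [hσ (u (k m))]
    have h1 : ∑' p : ι, (⟪a (π p), u (k m)⟫ : ℂ)
        = ∑' (n : ℕ) (c : {i : ℕ // i ∈ F (k n)}), (⟪a c.1, u (k m)⟫ : ℂ) :=
      Summable.tsum_sigma' (fun n => (hasSum_fintype _).summable) (hsι (u (k m)))
    rw [show (fun b : ι => (⟪(⟪x (π b), v⟫ : ℂ) • y (π b), u (k m)⟫ : ℂ))
        = fun p : ι => (⟪a (π p), u (k m)⟫ : ℂ) from rfl, h1]
    congr 1 with n
    exact hrow n (u (k m))
  have hsn : ∀ m, Summable (fun n : ℕ => (⟪u (k n), u (k m)⟫ : ℂ)) := by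
    intro m
    have h1 := (hsι (u (k m))).sigma' (fun n => (hasSum_fintype _).summable)
    refine h1.congr fun n => ?_
    exact hrow n (u (k m))
  -- the lower estimate
  have hest : ∀ m, (3 / 4 : ℝ) * ε ^ 2 ≤ ‖(⟪σ, u (k m)⟫ : ℂ)‖ := by
    intro m
    set f : ℕ → ℂ := fun n => (⟪u (k n), u (k m)⟫ : ℂ) with hfdef
    have hsplit := Summable.tsum_eq_add_tsum_ite (hsn m) m
    set E : ℕ → ℝ := fun n =>
      (if n < m then b m else 0) + (if m < n then b n else 0) with hE
    have hEnonneg : ∀ n, 0 ≤ E n := by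
      intro n; rw [hE]; positivity
    have hterm : ∀ n, ‖(if n = m then (0 : ℂ) else f n)‖ ≤ E n := by
      intro n
      rcases lt_trichotomy n m with h1 | h1 | h1
      · rw [if_neg h1.ne, hE]
        simp only [if_pos h1, if_neg (not_lt_of_gt h1)]
        rw [add_zero]
        exact hksmall n m h1
      · subst h1; simp [hEnonneg n]
      · rw [if_neg h1.ne', hE]
        simp only [if_neg (not_lt_of_gt h1), if_pos h1]
        rw [zero_add, hfdef]
        calc ‖(⟪u (k n), u (k m)⟫ : ℂ)‖ = ‖(⟪u (k m), u (k n)⟫ : ℂ)‖ :=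
              norm_inner_symm _ _
          _ ≤ b n := hksmall m n h1
    have hbsummable : Summable b := by
      rw [hb]
      exact ((summable_geometric_of_lt_one (by norm_num) (by norm_num)).mul_left
        (ε ^ 2)).div_const 16
    have hE1zero : ∀ n ∉ Finset.range m, (if n < m then b m else 0) = 0 := by
      intro n hn
      rw [Finset.mem_range] at hn
      rw [if_neg hn]
    have hE1summable : Summable (fun n => if n < m then b m else 0) :=
      summable_of_ne_finset_zero (s := Finset.range m) hE1zero
    have hE2le : ∀ n, (if m < n then b n else 0) ≤ b n := by
      intro n
      by_cases hmn : m < n <;> simp [hmn, (hbpos n).le]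
    have hE2nonneg : ∀ n, (0:ℝ) ≤ (if m < n then b n else 0) := by
      intro n; positivity
    have hE2summable : Summable (fun n => if m < n then b n else 0) :=
      Summable.of_nonneg_of_le hE2nonneg hE2le hbsummable
    have hEsummable : Summable E := hE1summable.add hE2summable
    have hnormsummable : Summable (fun n => ‖(if n = m then (0 : ℂ) else f n)‖) :=
      Summable.of_nonneg_of_le (fun n => norm_nonneg _) hterm hEsummable
    have hrest : ‖∑' n : ℕ, (if n = m then (0 : ℂ) else f n)‖ ≤ (1 / 4 : ℝ) * ε ^ 2 := by
      calc ‖∑' n : ℕ, (if n = m then (0 : ℂ) else f n)‖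
          ≤ ∑' n : ℕ, ‖(if n = m then (0 : ℂ) else f n)‖ :=
            norm_tsum_le_tsum_norm hnormsummable
        _ ≤ ∑' n, E n := Summable.tsum_le_tsum hterm hnormsummable hEsummable
        _ = (∑' n, if n < m then b m else 0) + ∑' n, if m < n then b n else 0 := by
            rw [hE, Summable.tsum_add hE1summable hE2summable]
        _ ≤ (1 / 16 : ℝ) * ε ^ 2 + (1 / 8 : ℝ) * ε ^ 2 := by
            gcongr
            · -- first sum: m * b m ≤ ε²/16
              rw [tsum_eq_sum (s := Finset.range m) hE1zero]
              have : ∑ n ∈ Finset.range m, (if n < m then b m else 0) = m * b m := by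
                rw [Finset.sum_congr rfl fun n hn => if_pos (Finset.mem_range.1 hn)]
                simp [mul_comm]
              rw [this]
              show (m : ℝ) * (ε ^ 2 * (1 / 4 : ℝ) ^ m / 16) ≤ (1 / 16 : ℝ) * ε ^ 2
              have hm4 : (m : ℝ) ≤ 4 ^ m := by
                exact_mod_cast (Nat.lt_pow_self (n := m) (by norm_num : 1 < 4)).le
              have h4 : (1 / 4 : ℝ) ^ m = ((4 : ℝ) ^ m)⁻¹ := by
                rw [one_div, inv_pow]
              rw [h4]
              rw [show (m : ℝ) * (ε ^ 2 * ((4 : ℝ) ^ m)⁻¹ / 16)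
                  = ((m : ℝ) * ((4 : ℝ) ^ m)⁻¹) * (ε ^ 2 / 16) by ring]
              have hle1 : (m : ℝ) * ((4 : ℝ) ^ m)⁻¹ ≤ 1 := by
                rw [mul_inv_le_iff₀ (by positivity), one_mul]
                exact hm4
              calc ((m : ℝ) * ((4 : ℝ) ^ m)⁻¹) * (ε ^ 2 / 16)
                  ≤ 1 * (ε ^ 2 / 16) := mul_le_mul_of_nonneg_right hle1 (by positivity)
                _ = (1 / 16 : ℝ) * ε ^ 2 := by ring
            · -- second sum: ≤ Σ b ≤ ε²/12 ≤ ε²/8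
              calc (∑' n, if m < n then b n else 0) ≤ ∑' n, b n :=
                    Summable.tsum_le_tsum hE2le hE2summable hbsummable
                _ = ε ^ 2 / 16 * (1 - 1 / 4 : ℝ)⁻¹ := by
                    have hbn : ∀ n, b n = ε ^ 2 / 16 * (1 / 4 : ℝ) ^ n := fun n => by
                      show ε ^ 2 * (1 / 4 : ℝ) ^ n / 16 = _; ring
                    simp only [hbn]
                    rw [tsum_mul_left, tsum_geometric_of_lt_one (by norm_num) (by norm_num)]
                _ ≤ (1 / 8 : ℝ) * ε ^ 2 := by nlinarith [sq_nonneg ε]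
        _ ≤ (1 / 4 : ℝ) * ε ^ 2 := by nlinarith [sq_nonneg ε]
    have hfm : ε ^ 2 ≤ ‖f m‖ := by
      show ε ^ 2 ≤ ‖(⟪u (k m), u (k m)⟫ : ℂ)‖
      have : (⟪u (k m), u (k m)⟫ : ℂ) = (‖u (k m)‖ : ℂ) ^ 2 :=
        inner_self_eq_norm_sq_to_K (u (k m))
      rw [this]
      rw [show ‖((‖u (k m)‖ : ℂ)) ^ 2‖ = ‖u (k m)‖ ^ 2 by
        rw [norm_pow]; norm_num]
      exact pow_le_pow_left₀ hε.le (hnorm (k m)) 2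
    rw [hkey m, hsplit]
    calc (3 / 4 : ℝ) * ε ^ 2 = ε ^ 2 - (1 / 4 : ℝ) * ε ^ 2 := by ring
      _ ≤ ‖f m‖ - ‖∑' n : ℕ, (if n = m then (0 : ℂ) else f n)‖ := by
          have := hfm; have := hrest; linarith
      _ ≤ ‖f m + ∑' n : ℕ, (if n = m then (0 : ℂ) else f n)‖ := by
          have htri : ‖f m‖ ≤ ‖f m + ∑' n : ℕ, (if n = m then (0 : ℂ) else f n)‖
              + ‖∑' n : ℕ, (if n = m then (0 : ℂ) else f n)‖ := by
            calc ‖f m‖ = ‖(f m + ∑' n : ℕ, (if n = m then (0 : ℂ) else f n))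
                - ∑' n : ℕ, (if n = m then (0 : ℂ) else f n)‖ := by congr 1; ring
              _ ≤ _ := norm_sub_le _ _
          linarith
  -- contradiction with weak convergence to 0
  have h0 : Tendsto (fun m => (⟪σ, u (k m)⟫ : ℂ)) atTop (nhds 0) :=
    (hweak σ).comp hkmono.tendsto_atTop
  have h1 : Tendsto (fun m => ‖(⟪σ, u (k m)⟫ : ℂ)‖) atTop (nhds 0) := by
    simpa using h0.norm
  have h2 : ∀ᶠ m in atTop, ‖(⟪σ, u (k m)⟫ : ℂ)‖ < (3 / 4 : ℝ) * ε ^ 2 :=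
    h1.eventually_lt_const (by positivity)
  obtain ⟨m, hm⟩ := h2.exists
  exact absurd (hest m) (not_le.2 hm)

private lemma framing_adjoint (x y : ℕ → H)
    (h : ∀ v : H, HasSum (fun i => (⟪y i, v⟫ : ℂ) • x i) v) (v : H) :
    HasSum (fun i => (⟪x i, v⟫ : ℂ) • y i) v := by
  obtain ⟨s, hs⟩ := framing_summable_s13 x y h v
  have hsv : s = v := by
    refine (ext_inner_left ℂ fun w => ?_)
    have h1 : HasSum (fun i => (⟪w, (⟪x i, v⟫ : ℂ) • y i⟫ : ℂ)) ⟪w, s⟫ :=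
      (innerSL ℂ w).hasSum hs
    exact h1.unique (framing_weak_hasSum x y h v w)
  exact hsv ▸ hs

end FramingAux

/-- `(x_i, y_i)` is a framing for a Hilbert space `H` if and only if `(y_i, x_i)`
is a framing for `H`. -/
theorem stmt13 {H : Type*} [NormedAddCommGroup H] [InnerProductSpace ℂ H] [CompleteSpace H]
    (x y : ℕ → H) :
    (∀ v : H, HasSum (fun i => (inner ℂ (y i) v : ℂ) • x i) v) ↔
      (∀ v : H, HasSum (fun i => (inner ℂ (x i) v : ℂ) • y i) v) := by
  exact ⟨fun h v => framing_adjoint x y h v, fun h v => framing_adjoint y x h v⟩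
end

section
/- Let A be a finite-rank bounded operator on a Hilbert space H of rank k. Then there exist rank-one operators Q_1, ..., Q_k with A = Σ_{i=1}^k Q_i and ‖Σ_{i∈I} Q_i‖ ≤ ‖A‖ for every subset I ⊆ {1, ..., k}. -/
/-- Let `A` be a finite-rank bounded operator on a Hilbert space `H` of rank `k`.
Then `A = Q_1 + ⋯ + Q_k` with each `Q_i` a rank-one operator and
`‖Σ_{i ∈ I} Q_i‖ ≤ ‖A‖` for every subset `I ⊆ {1, …, k}`. -/
theorem stmt18 {H : Type*} [NormedAddCommGroup H] [InnerProductSpace ℂ H] [CompleteSpace H]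
    (A : H →L[ℂ] H) (k : ℕ)
    (hfin : FiniteDimensional ℂ (LinearMap.range (A : H →ₗ[ℂ] H)))
    (hrank : Module.finrank ℂ (LinearMap.range (A : H →ₗ[ℂ] H)) = k) :
    ∃ Q : Fin k → (H →L[ℂ] H),
      (∀ i, ∃ u w : H, ∀ z : H, Q i z = (inner ℂ w z : ℂ) • u) ∧
      A = ∑ i, Q i ∧
      ∀ I : Finset (Fin k), ‖∑ i ∈ I, Q i‖ ≤ ‖A‖ := by
  classical
  set S := LinearMap.range (A : H →ₗ[ℂ] H) with hS
  -- orthonormal basis of the range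
  let b : OrthonormalBasis (Fin k) ℂ S :=
    (stdOrthonormalBasis ℂ S).reindex (finCongr hrank)
  set f : Fin k → H := fun i => ((b i : S) : H) with hf
  have hon : Orthonormal ℂ f := by
    rw [orthonormal_iff_ite]
    intro i j
    have := b.orthonormal
    rw [orthonormal_iff_ite] at this
    simpa [hf, ← Submodule.coe_inner] using this i j
  -- the rank one operators
  refine ⟨fun i => ((innerSL ℂ (f i)).smulRight (f i)).comp A, ?_, ?_, ?_⟩
  · intro i
    exact ⟨f i, (A.adjoint) (f i), fun z => by
      simp [ContinuousLinearMap.smulRight_apply, ContinuousLinearMap.adjoint_inner_left]⟩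
  · ext z
    have hmem : A z ∈ S := LinearMap.mem_range_self _ z
    have h2 : ((∑ i, (inner ℂ (b i) (⟨A z, hmem⟩ : S) : ℂ) • b i : S) : H) = A z := by
      rw [b.sum_repr' ⟨A z, hmem⟩]
    simp only [Submodule.coe_sum, Submodule.coe_smul] at h2
    have hterm : ∀ i : Fin k, (inner ℂ (f i) (A z) : ℂ) = inner ℂ (b i) (⟨A z, hmem⟩ : S) :=
      fun i => (Submodule.coe_inner S (b i) ⟨A z, hmem⟩).symm
    simp only [ContinuousLinearMap.sum_apply, ContinuousLinearMap.comp_apply,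
      ContinuousLinearMap.smulRight_apply, innerSL_apply_apply]
    rw [Finset.sum_congr rfl fun i _ => by rw [hterm i]]
    exact h2.symm
  · intro I
    refine ContinuousLinearMap.opNorm_le_bound _ (norm_nonneg A) fun z => ?_
    have key : ‖∑ i ∈ I, (inner ℂ (f i) (A z) : ℂ) • f i‖ ≤ ‖A z‖ := by
      have hsq : ‖∑ i ∈ I, (inner ℂ (f i) (A z) : ℂ) • f i‖ ^ 2
          = ∑ i ∈ I, ‖(inner ℂ (f i) (A z) : ℂ)‖ ^ 2 := by
        rw [norm_sq_eq_re_inner (𝕜 := ℂ),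
          hon.inner_sum (fun i => (inner ℂ (f i) (A z) : ℂ))
            (fun i => (inner ℂ (f i) (A z) : ℂ)) I, map_sum]
        refine Finset.sum_congr rfl fun i _ => ?_
        rw [RCLike.conj_mul]
        norm_cast
      have hb : ‖∑ i ∈ I, (inner ℂ (f i) (A z) : ℂ) • f i‖ ^ 2 ≤ ‖A z‖ ^ 2 := by
        rw [hsq]; exact hon.sum_inner_products_le (A z)
      have := Real.sqrt_le_sqrt hb
      rwa [Real.sqrt_sq (norm_nonneg _), Real.sqrt_sq (norm_nonneg _)] at this
    have h4 : ‖(∑ i ∈ I, ((innerSL ℂ (f i)).smulRight (f i)).comp A) z‖ ≤ ‖A z‖ := by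
      simp only [ContinuousLinearMap.sum_apply, ContinuousLinearMap.comp_apply,
        ContinuousLinearMap.smulRight_apply, innerSL_apply_apply]
      exact key
    exact h4.trans (A.le_opNorm z)
end

section
/- Uniform boundedness of Rademacher projections: Let 1 < p < ∞ with conjugate exponent q, and let r_1,...,r_n ∈ ℓ_p^{2^n} be the Rademacher vectors r_i = 2^{-n/p} Σ_{j=1}^{2^n} ε_{ij} e_j (with signs ε_{ij} = ±1 satisfying Σ_j ε_{ij}ε_{kj} = δ_{ik}·2^n), and r_i* ∈ ℓ_q^{2^n} the dual Rademacher vectors. Then the projection P_n : ℓ_p^{2^n} → ℓ_p^{2^n} given by P_n(x) = Σ_{i=1}^n r_i*(x) r_i satisfies P_n² = P_n and ‖P_n‖ ≤ B_p B_q, where B_p, B_q are the upper Khintchine constants (so the P_n are uniformly bounded in n). -/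
open scoped ENNReal

/-- **Uniform boundedness of the Rademacher projections.**
Let `1 < p < ∞` with conjugate exponent `q`, let `ε i j = ±1` be signs satisfying the
orthogonality relations `Σ_j ε i j · ε k j = δ_{ik} · 2ⁿ`, let
`r i = 2^{-n/p} Σ_j ε i j · e j ∈ ℓ_p^{2ⁿ}` be the Rademacher vectors, and let
`rs i` be the dual Rademacher functionals `rs i x = Σ_j 2^{-n/q} ε i j · x j`.
If `Bp` (resp. `Bq`) is an upper Khintchine constant for the Rademacher vectors in
`ℓ_p^{2ⁿ}` (resp. for the dual Rademacher vectors in `ℓ_q^{2ⁿ}`), then the map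
`P x = Σ_i rs i x • r i` is an idempotent (a projection) on `ℓ_p^{2ⁿ}` with
`‖P x‖ ≤ Bp · Bq · ‖x‖` for all `x`, i.e. `‖P‖ ≤ Bp · Bq`, uniformly in `n`. -/
theorem stmt19 (n : ℕ) (p q : ℝ≥0∞) [Fact (1 ≤ p)] [Fact (1 ≤ q)]
    (hp : 1 < p) (hq : 1 < q) (hpq : 1 / p + 1 / q = 1)
    (ε : Fin n → Fin (2 ^ n) → ℝ) (hε : ∀ i j, ε i j = 1 ∨ ε i j = -1)
    (horth : ∀ i k : Fin n, ∑ j, ε i j * ε k j = if i = k then (2 ^ n : ℝ) else 0)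
    (r : Fin n → PiLp p (fun _ : Fin (2 ^ n) => ℝ))
    (hr : ∀ i j, r i j = ((2 : ℝ) ^ n) ^ (-(1 / p.toReal)) * ε i j)
    (rstar : Fin n → PiLp q (fun _ : Fin (2 ^ n) => ℝ))
    (hrstar : ∀ i j, rstar i j = ((2 : ℝ) ^ n) ^ (-(1 / q.toReal)) * ε i j)
    (rs : Fin n → PiLp p (fun _ : Fin (2 ^ n) => ℝ) → ℝ)
    (hrs : ∀ i x, rs i x = ∑ j, rstar i j * x j)
    (Bp Bq : ℝ) (hBp0 : 0 ≤ Bp) (hBq0 : 0 ≤ Bq)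
    (hBp : ∀ a : Fin n → ℝ, ‖∑ i, a i • r i‖ ≤ Bp * Real.sqrt (∑ i, (a i) ^ 2))
    (hBq : ∀ a : Fin n → ℝ, ‖∑ i, a i • rstar i‖ ≤ Bq * Real.sqrt (∑ i, (a i) ^ 2))
    (P : PiLp p (fun _ : Fin (2 ^ n) => ℝ) →ₗ[ℝ] PiLp p (fun _ : Fin (2 ^ n) => ℝ))
    (hP : ∀ x, P x = ∑ i, rs i x • r i) :
    P ∘ₗ P = P ∧ ∀ x, ‖P x‖ ≤ Bp * Bq * ‖x‖ := by
  -- p and q are finite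
  have hqne : q ≠ ∞ := by
    intro h
    rw [h, ENNReal.div_top, add_zero, one_div, ENNReal.inv_eq_one] at hpq
    exact hp.ne' hpq
  have hpne : p ≠ ∞ := by
    intro h
    rw [h, ENNReal.div_top, zero_add, one_div, ENNReal.inv_eq_one] at hpq
    exact hq.ne' hpq
  have hp0 : p ≠ 0 := (lt_trans zero_lt_one hp).ne'
  have hq0 : q ≠ 0 := (lt_trans zero_lt_one hq).ne'
  have hp1 : 1 < p.toReal := by
    rw [← ENNReal.toReal_one]
    exact (ENNReal.toReal_lt_toReal ENNReal.one_ne_top hpne).2 hp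
  have hq1 : 1 < q.toReal := by
    rw [← ENNReal.toReal_one]
    exact (ENNReal.toReal_lt_toReal ENNReal.one_ne_top hqne).2 hq
  have hconj : 1 / p.toReal + 1 / q.toReal = 1 := by
    have h := congrArg ENNReal.toReal hpq
    rw [ENNReal.toReal_add (by simp [one_div, ENNReal.inv_ne_top, hp0])
      (by simp [one_div, ENNReal.inv_ne_top, hq0])] at h
    simpa [one_div, ENNReal.toReal_inv] using h
  have conjqp : (q.toReal).HolderConjugate p.toReal :=
    ⟨by simp only [inv_eq_one_div]; linarith, by linarith, by linarith⟩
  have h2pos : (0 : ℝ) < 2 ^ n := by positivity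
  -- duality relation : ∑_j rstar i j * r k j = δ_{ik}
  have hdual : ∀ i k : Fin n, ∑ j, rstar i j * r k j = if i = k then (1 : ℝ) else 0 := by
    intro i k
    have h1 : ∑ j, rstar i j * r k j
        = ((2 : ℝ) ^ n) ^ (-(1 / q.toReal)) * ((2 : ℝ) ^ n) ^ (-(1 / p.toReal))
          * ∑ j, ε i j * ε k j := by
      rw [Finset.mul_sum]
      refine Finset.sum_congr rfl fun j _ => ?_
      rw [hrstar, hr]; ring
    rw [h1, horth]
    split
    · have h2 : ((2 : ℝ) ^ n) ^ (-(1 / q.toReal)) * ((2 : ℝ) ^ n) ^ (-(1 / p.toReal))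
          * (2 : ℝ) ^ n
          = ((2 : ℝ) ^ n) ^ (-(1 / q.toReal) + -(1 / p.toReal) + 1) := by
        rw [Real.rpow_add h2pos, Real.rpow_add h2pos, Real.rpow_one]
      rw [h2, show -(1 / q.toReal) + -(1 / p.toReal) + 1 = 0 by linarith, Real.rpow_zero]
    · rw [mul_zero]
  -- application of a finite sum of scalar multiples
  have happ : ∀ (c : Fin n → ℝ) (j : Fin (2 ^ n)),
      (∑ k, c k • r k) j = ∑ k, c k * r k j := by
    intro c j
    rw [show ((∑ k, c k • r k) j) = ∑ k, (c k • r k) j from by rw [WithLp.ofLp_sum, Finset.sum_apply]]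
    rfl
  have happ' : ∀ (c : Fin n → ℝ) (j : Fin (2 ^ n)),
      (∑ k, c k • rstar k) j = ∑ k, c k * rstar k j := by
    intro c j
    rw [show ((∑ k, c k • rstar k) j) = ∑ k, (c k • rstar k) j from
      by rw [WithLp.ofLp_sum, Finset.sum_apply]]
    rfl
  -- rs i applied to a combination of the Rademacher vectors
  have hrscomb : ∀ (i : Fin n) (c : Fin n → ℝ), rs i (∑ k, c k • r k) = c i := by
    intro i c
    rw [hrs]
    calc ∑ j, rstar i j * (∑ k, c k • r k) j
        = ∑ j, ∑ k, c k * (rstar i j * r k j) := by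
          refine Finset.sum_congr rfl fun j _ => ?_
          rw [happ, Finset.mul_sum]
          exact Finset.sum_congr rfl fun k _ => by ring
      _ = ∑ k, c k * ∑ j, rstar i j * r k j := by
          rw [Finset.sum_comm]
          exact Finset.sum_congr rfl fun k _ => by rw [Finset.mul_sum]
      _ = c i := by
          simp only [hdual, mul_ite, mul_one, mul_zero]
          simp
  -- Hölder pairing
  have hholder : ∀ (f : PiLp q (fun _ : Fin (2 ^ n) => ℝ))
      (x : PiLp p (fun _ : Fin (2 ^ n) => ℝ)), ∑ j, f j * x j ≤ ‖f‖ * ‖x‖ := by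
    intro f x
    rw [PiLp.norm_eq_sum (by positivity : 0 < q.toReal) f,
      PiLp.norm_eq_sum (by positivity : 0 < p.toReal) x]
    simpa [Real.norm_eq_abs] using
      Real.inner_le_Lp_mul_Lq (Finset.univ) (fun j => f j) (fun j => x j) conjqp
  -- the key estimate : √(∑ (rs i x)²) ≤ Bq ‖x‖
  have hkey : ∀ x : PiLp p (fun _ : Fin (2 ^ n) => ℝ),
      Real.sqrt (∑ i, (rs i x) ^ 2) ≤ Bq * ‖x‖ := by
    intro x
    obtain ⟨a, ha⟩ : ∃ a : Fin n → ℝ, ∀ i, rs i x = a i := ⟨fun i => rs i x, fun _ => rfl⟩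
    simp only [ha]
    have hS0 : (0 : ℝ) ≤ ∑ i, (a i) ^ 2 := Finset.sum_nonneg fun i _ => sq_nonneg _
    have hSle : ∑ i, (a i) ^ 2 ≤ Bq * Real.sqrt (∑ i, (a i) ^ 2) * ‖x‖ := by
      have h1 : ∑ i, (a i) ^ 2 = ∑ j, (∑ i, a i • rstar i) j * x j := by
        calc ∑ i, (a i) ^ 2 = ∑ i, a i * ∑ j, rstar i j * x j := by
              refine Finset.sum_congr rfl fun i _ => ?_
              rw [sq, ← hrs i x, ha i]
          _ = ∑ i, ∑ j, a i * (rstar i j * x j) :=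
              Finset.sum_congr rfl fun i _ => by rw [Finset.mul_sum]
          _ = ∑ j, (∑ i, a i • rstar i) j * x j := by
              rw [Finset.sum_comm]
              refine Finset.sum_congr rfl fun j _ => ?_
              rw [happ', Finset.sum_mul]
              exact Finset.sum_congr rfl fun i _ => by ring
      calc ∑ i, (a i) ^ 2 = ∑ j, (∑ i, a i • rstar i) j * x j := h1
        _ ≤ ‖∑ i, a i • rstar i‖ * ‖x‖ := hholder _ _
        _ ≤ Bq * Real.sqrt (∑ i, (a i) ^ 2) * ‖x‖ :=
            mul_le_mul_of_nonneg_right (hBq a) (norm_nonneg x)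
    rcases eq_or_lt_of_le (Real.sqrt_nonneg (∑ i, (a i) ^ 2)) with h0 | h0
    · rw [← h0]
      positivity
    · have h2 : Real.sqrt (∑ i, (a i) ^ 2) * Real.sqrt (∑ i, (a i) ^ 2)
          ≤ Bq * ‖x‖ * Real.sqrt (∑ i, (a i) ^ 2) := by
        rw [Real.mul_self_sqrt hS0]
        calc ∑ i, (a i) ^ 2 ≤ Bq * Real.sqrt (∑ i, (a i) ^ 2) * ‖x‖ := hSle
          _ = Bq * ‖x‖ * Real.sqrt (∑ i, (a i) ^ 2) := by ring
      exact le_of_mul_le_mul_right h2 h0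
  constructor
  · refine LinearMap.ext fun x => ?_
    rw [LinearMap.comp_apply]
    conv_lhs => rw [hP (P x)]
    conv_rhs => rw [hP x]
    refine Finset.sum_congr rfl fun i _ => ?_
    congr 1
    conv_lhs => rw [hP x]
    exact hrscomb i fun k => rs k x
  · intro x
    rw [hP x]
    calc ‖∑ i, rs i x • r i‖ ≤ Bp * Real.sqrt (∑ i, (rs i x) ^ 2) := hBp _
      _ ≤ Bp * (Bq * ‖x‖) := mul_le_mul_of_nonneg_left (hkey x) hBp0
      _ = Bp * Bq * ‖x‖ := by ring
end
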